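/- For every n ≥ 0 and every A with 0 ≤ A ≤ ⌊n²/4⌋, there exists exactly one Motzkin path mz of width n and area A with the following property: for every i with 0 ≤ i ≤ n, the area under the first i moves of mz is maximal among the areas under the first i moves of all Motzkin paths of width n and area A (this mz is called the canonic path for n and A). In particular, for every A with 0 ≤ A ≤ ⌊n²/4⌋, the set MZ(n,A) of Motzkin paths of width n and area A is nonempty. -/
import Mathlib


/-- Moves of a Motzkin path: Up-right, Horizontal-right, Down-right. -/
inductive Move : Type
  | U : Move
  | H : Move
  | D : Move
deriving DecidableEq

open Move

/-- The vertical step of a move. -/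
def Move.step : Move → ℤ
  | U => 1
  | H => 0
  | D => -1

/-- The height of a path after its first `i` moves. -/
def heightAt (mz : List Move) (i : ℕ) : ℤ :=
  ((mz.take i).map Move.step).sum

/-- A word over {U,H,D} is a Motzkin path if it never goes below the x-axis
and ends on the x-axis. -/
def IsMotzkin (mz : List Move) : Prop :=
  (∀ i, 0 ≤ heightAt mz i) ∧ heightAt mz mz.length = 0

/-- The area between the x-axis and the path (sum of heights at integer points). -/
def area (mz : List Move) : ℤ :=
  ∑ i ∈ Finset.range (mz.length + 1), heightAt mz i

/-- `MZ n A` is the set of Motzkin paths of width `n` and area `A`. -/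
def MZ (n A : ℕ) : Set (List Move) :=
  {mz | mz.length = n ∧ IsMotzkin mz ∧ area mz = A}

/-- The weight `ω_i` of the `i`-th move (0-indexed): it is `h_i` for U and D moves
(height after the move for U, before the move for D) and `2h_i + 1` for H moves. -/
def moveWeight (mz : List Move) (i : ℕ) : ℤ :=
  match mz[i]? with
  | some U => heightAt mz (i + 1)
  | some D => heightAt mz i
  | some H => 2 * heightAt mz i + 1
  | none => 1

/-- The weight `ω(mz)` of a Motzkin path. -/
def weight (mz : List Move) : ℤ :=
  ∏ i ∈ Finset.range mz.length, moveWeight mz i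

/-- The total displacement `D(π) = Σ_i |i - π(i)|` of a permutation. -/
def totalDisp {n : ℕ} (π : Equiv.Perm (Fin n)) : ℤ :=
  ∑ i : Fin n, |((π i : ℕ) : ℤ) - ((i : ℕ) : ℤ)|

/-- The word over {U,H,D} associated to a permutation. -/
def toPath {n : ℕ} (π : Equiv.Perm (Fin n)) : List Move :=
  (List.finRange n).map fun i : Fin n =>
    if (i : ℕ) < (π i : ℕ) ∧ (i : ℕ) < (π.symm i : ℕ) then U
    else if (π i : ℕ) < (i : ℕ) ∧ (π.symm i : ℕ) < (i : ℕ) then D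
    else H

/-- The last fall length: the length of the maximal suffix consisting of D moves. -/
def lastFall (mz : List Move) : ℕ :=
  (mz.reverse.takeWhile (fun m => decide (m = D))).length

/-- The maximum height of a path. -/
def maxHeight (mz : List Move) : ℕ :=
  (Finset.range (mz.length + 1)).sup fun i => (heightAt mz i).toNat

/-- `flatsAt mz k` is the number of H moves of `mz` made at height `k`. -/
def flatsAt (mz : List Move) (k : ℕ) : ℕ :=
  ((Finset.range mz.length).filter fun j => mz[j]? = some H ∧ heightAt mz j = (k : ℤ)).card

/-- `peaksAt mz k` is the number of U moves of `mz` ending at height `k`. -/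
def peaksAt (mz : List Move) (k : ℕ) : ℕ :=
  ((Finset.range mz.length).filter fun j => mz[j]? = some U ∧ heightAt mz (j + 1) = (k : ℤ)).card

/-- `downsAt mz k` is the number of D moves of `mz` starting at height `k`. -/
def downsAt (mz : List Move) (k : ℕ) : ℕ :=
  ((Finset.range mz.length).filter fun j => mz[j]? = some D ∧ heightAt mz j = (k : ℤ)).card

/-- A candidate building sequence `(f_0, p_1, f_1, …, p_h, f_h)`, recorded as its
height `h` together with the flat counts `f` and peak counts `p`. -/
structure BSeq where
  h : ℕ
  f : ℕ → ℕ
  p : ℕ → ℕ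

/-- `Sset n A` is the set of building sequences for width `n` and area `A`:
all `p`-entries `p_1, …, p_h` are positive, entries beyond the height are zero, and the
width and area conditions hold. -/
def Sset (n A : ℕ) : Set BSeq :=
  {a | (∀ i, 1 ≤ i → i ≤ a.h → 0 < a.p i) ∧
       a.p 0 = 0 ∧
       (∀ i, a.h < i → a.p i = 0) ∧
       (∀ i, a.h < i → a.f i = 0) ∧
       (∑ i ∈ Finset.range (a.h + 1), a.f i) + 2 * (∑ i ∈ Finset.Icc 1 a.h, a.p i) = n ∧
       (∑ i ∈ Finset.range (a.h + 1), i * a.f i) +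
         (∑ i ∈ Finset.Icc 1 a.h, (2 * i - 1) * a.p i) = A}

/-- `mz` has building sequence `a`. -/
def hasBuildSeq (mz : List Move) (a : BSeq) : Prop :=
  maxHeight mz = a.h ∧ (∀ i, flatsAt mz i = a.f i) ∧ (∀ i, peaksAt mz i = a.p i)

/-- `perm(a) = ∏_{i=0}^h (2i+1)^{f_i} · ∏_{i=1}^h i^{2p_i}`. -/
def permWeight (a : BSeq) : ℕ :=
  (∏ i ∈ Finset.range (a.h + 1), (2 * i + 1) ^ a.f i) *
    ∏ i ∈ Finset.Icc 1 a.h, i ^ (2 * a.p i)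

/-- `m(a)`, the number of Motzkin paths with building sequence `a`. -/
def mcount (a : BSeq) : ℕ :=
  Nat.choose (a.f a.h + a.p a.h - 1) (a.p a.h - 1) *
    (∏ i ∈ Finset.Icc 1 (a.h - 1),
      Nat.choose (a.p (i + 1) + a.f i) (a.f i) *
        Nat.choose (a.p (i + 1) + a.f i + a.p i - 1) (a.p i - 1)) *
    Nat.choose (a.p 1 + a.f 0) (a.f 0)

/-- `M(n,A,l)`: the number of Motzkin paths of width `n`, area `A` and last fall length `l`
(for negative arguments there are no such paths, so the value is `0`; the value at
`(0,0,0)` is `1`, counting the empty path). -/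
noncomputable def Mcount (n A l : ℤ) : ℕ :=
  Nat.card {mz : List Move // (mz.length : ℤ) = n ∧ IsMotzkin mz ∧ area mz = A ∧
    (lastFall mz : ℤ) = l}

/-- `D(n,d,l)`: the sum of the weights of all Motzkin paths of width `n`, area `d` and
last fall length `l`. -/
noncomputable def Dw (n d l : ℤ) : ℤ :=
  ∑ᶠ mz ∈ {mz : List Move | (mz.length : ℤ) = n ∧ IsMotzkin mz ∧ area mz = d ∧
    (lastFall mz : ℤ) = l}, weight mz

/-- `M(n,A,h,p)`: the number of Motzkin paths of width `n`, area `A`, maximum height `h`,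
with exactly `p` U-moves ending at height `h` and no H-moves at height `h`. -/
noncomputable def Mtop (n A h p : ℤ) : ℕ :=
  Nat.card {mz : List Move // (mz.length : ℤ) = n ∧ IsMotzkin mz ∧ area mz = A ∧
    (maxHeight mz : ℤ) = h ∧ (peaksAt mz h.toNat : ℤ) = p ∧ flatsAt mz h.toNat = 0}

/-- `D(n,d,h,p)`: the sum of weights of Motzkin paths of width `n`, area `d`,
maximum height `h`, with exactly `p` U-moves ending at height `h` and no H-moves at height `h`. -/
noncomputable def Dtop (n d h p : ℤ) : ℤ :=
  ∑ᶠ mz ∈ {mz : List Move | (mz.length : ℤ) = n ∧ IsMotzkin mz ∧ area mz = d ∧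
    (maxHeight mz : ℤ) = h ∧ (peaksAt mz h.toNat : ℤ) = p ∧ flatsAt mz h.toNat = 0}, weight mz

/-- The area under the first `i` moves of a path (trapezoid rule; may be a half-integer). -/
def prefixArea (mz : List Move) (i : ℕ) : ℚ :=
  ∑ j ∈ Finset.range i, ((heightAt mz j : ℚ) + (heightAt mz (j + 1) : ℚ)) / 2

-- bridge lemmas
lemma heightAt_zero (mz : List Move) : heightAt mz 0 = 0 := rfl

lemma heightAt_succ (mz : List Move) {i : ℕ} (hi : i < mz.length) :
    heightAt mz (i + 1) = heightAt mz i + (mz[i]).step := by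
  unfold heightAt
  rw [List.take_succ, List.getElem?_eq_getElem hi, List.map_append, List.sum_append]
  simp

lemma heightAt_of_le (mz : List Move) {i : ℕ} (hi : mz.length ≤ i) :
    heightAt mz i = heightAt mz mz.length := by
  unfold heightAt
  rw [List.take_of_length_le hi, List.take_of_length_le (le_refl _)]

lemma step_abs (m : Move) : m.step = 1 ∨ m.step = 0 ∨ m.step = -1 := by
  cases m <;> simp [Move.step]

lemma step_inj {a b : Move} (h : a.step = b.step) : a = b := by
  cases a <;> cases b <;> simp_all [Move.step]

def ofHeights (h : ℕ → ℤ) (n : ℕ) : List Move :=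
  (List.range n).map fun i => if h i < h (i + 1) then U else if h (i + 1) < h i then D else H

lemma length_ofHeights (h : ℕ → ℤ) (n : ℕ) : (ofHeights h n).length = n := by
  simp [ofHeights]

lemma heightAt_ofHeights (h : ℕ → ℤ) (n : ℕ) (h0 : h 0 = 0)
    (hstep : ∀ i < n, |h (i + 1) - h i| ≤ 1) :
    ∀ i ≤ n, heightAt (ofHeights h n) i = h i := by
  intro i
  induction i with
  | zero => intro _; rw [heightAt_zero, h0]
  | succ i ih =>
    intro hin
    have hi : i < n := hin
    have hlen : i < (ofHeights h n).length := by rw [length_ofHeights]; exact hi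
    rw [heightAt_succ _ hlen, ih hi.le]
    have hgt : (ofHeights h n)[i] =
        (if h i < h (i + 1) then U else if h (i + 1) < h i then D else H) := by
      simp [ofHeights]
    rw [hgt]
    have := hstep i hi
    rw [abs_le] at this
    split_ifs with h1 h2 <;> simp [Move.step] <;> omega

/-- canonic height function with parameters -/
def cH (w t s : ℤ) (i : ℕ) : ℤ :=
  if w ≤ (i : ℤ) then 0
  else min (i : ℤ) (w - i - (if t < w - i then s else 0))

section cHlemmas

variable {w t s : ℤ} (hs0 : 0 ≤ s) (hs1 : s ≤ 1) (hst : s ≤ t) (ht0 : 0 ≤ t)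

set_option linter.unusedSectionVars false

include hs0 hs1 hst ht0 in
lemma cH_nonneg (i : ℕ) : 0 ≤ cH w t s i := by
  have : (0:ℤ) ≤ (i:ℤ) := Int.natCast_nonneg i
  unfold cH; simp only [min_def]; split_ifs <;> omega

include hs0 hs1 hst ht0 in
lemma cH_le (i : ℕ) (hi : (i : ℤ) ≤ w) : cH w t s i ≤ w - i := by
  unfold cH; simp only [min_def]; split_ifs <;> omega

include hs0 hs1 hst ht0 in
lemma cH_cases (i : ℕ) (hi : (i : ℤ) < w) : cH w t s i = i ∨ w - i - 1 ≤ cH w t s i := by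
  unfold cH; simp only [min_def]; split_ifs <;> omega

lemma cH_of_ge {w t s : ℤ} (i : ℕ) (hi : w ≤ (i : ℤ)) : cH w t s i = 0 := by
  unfold cH; rw [if_pos hi]

include hs0 hs1 hst ht0 in
lemma cH_step (i : ℕ) : |cH w t s (i + 1) - cH w t s i| ≤ 1 := by
  have h1 : ((i + 1 : ℕ) : ℤ) = (i : ℤ) + 1 := by push_cast; ring
  have : (0:ℤ) ≤ (i:ℤ) := Int.natCast_nonneg i
  rw [abs_le]
  unfold cH; simp only [min_def, h1]; constructor <;> (split_ifs <;> omega)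

variable {k u : ℤ} (hu0 : 0 ≤ u) (hu1 : u ≤ 1) (htk : t ≤ k) (hw : w = 2 * k + s + u)

include hs0 hs1 hst ht0 hu0 hu1 htk hw in
lemma cH_ascent (i : ℕ) (hik : (i : ℤ) ≤ k) : cH w t s i = i := by
  have : (0:ℤ) ≤ (i:ℤ) := Int.natCast_nonneg i
  unfold cH; simp only [min_def]; split_ifs <;> omega

include hs0 hs1 hst ht0 hu0 hu1 htk hw in
lemma cH_descent (i : ℕ) (hik : k < (i : ℤ)) (hiw : (i : ℤ) ≤ w) :
    cH w t s i = w - i - (if t < w - i then s else 0) := by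
  unfold cH; simp only [min_def]; split_ifs <;> omega

end cHlemmas

lemma gauss (m : ℕ) : 2 * ∑ i ∈ Finset.range m, (i : ℤ) = m * (m - 1) := by
  induction m with
  | zero => simp
  | succ m ih =>
    rw [Finset.sum_range_succ, mul_add, ih]
    push_cast; ring

lemma ite_sum (tn : ℕ) (sv : ℤ) :
    ∀ M : ℕ, tn + 1 ≤ M → ∑ j ∈ Finset.range M, (if (tn : ℤ) < (j : ℤ) then sv else 0)
      = sv * ((M : ℤ) - tn - 1) := by
  intro M
  induction M with
  | zero => omega
  | succ M ih =>
    intro hM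
    rw [Finset.sum_range_succ]
    rcases Nat.lt_or_ge tn M with h | h
    · rw [ih h, if_pos (by exact_mod_cast h)]
      push_cast; ring
    · have hM' : M = tn := by omega
      rw [hM']
      rw [if_neg (lt_irrefl ((tn:ℤ)))]
      rw [Finset.sum_eq_zero (fun j hj => by
        rw [Finset.mem_range] at hj
        rw [if_neg]; push_cast; omega)]
      push_cast; ring

lemma sum_cH (n kn tn sn un : ℕ) (hsu : sn ≤ 1) (hun : un ≤ 1) (hst : sn ≤ tn)
    (hts0 : sn = 0 → tn = 0) (hus : un ≤ sn) (htk : tn ≤ kn)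
    (hwn : 2 * kn + sn + un ≤ n) :
    2 * ∑ i ∈ Finset.range (n + 1), cH ((2 * kn + sn + un : ℕ) : ℤ) (tn : ℤ) (sn : ℤ) i
      = 2 * ((kn : ℤ) ^ 2 + un * kn + tn) := by
  have hs0 : (0:ℤ) ≤ (sn:ℤ) := Int.natCast_nonneg _
  have hs1 : (sn:ℤ) ≤ 1 := by exact_mod_cast hsu
  have hstz : (sn:ℤ) ≤ (tn:ℤ) := by exact_mod_cast hst
  have ht0 : (0:ℤ) ≤ (tn:ℤ) := Int.natCast_nonneg _
  have hu0z : (0:ℤ) ≤ (un : ℤ) := Int.natCast_nonneg _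
  have hu1z : (un : ℤ) ≤ 1 := by exact_mod_cast hun
  have htkz : (tn:ℤ) ≤ (kn : ℤ) := by exact_mod_cast htk
  have hwzz : ((2 * kn + sn + un : ℕ) : ℤ) = 2 * (kn : ℤ) + (sn:ℤ) + (un : ℤ) := by push_cast; ring
  have h1 : ∑ i ∈ Finset.range (n + 1), cH ((2 * kn + sn + un : ℕ) : ℤ) (tn:ℤ) (sn:ℤ) i
      = ∑ i ∈ Finset.range (2 * kn + sn + un + 1), cH ((2 * kn + sn + un : ℕ) : ℤ) (tn:ℤ) (sn:ℤ) i := by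
    refine (Finset.sum_subset (Finset.range_subset_range.mpr (by omega)) ?_).symm
    intro x _ hx
    rw [Finset.mem_range] at hx
    exact cH_of_ge x (by exact_mod_cast (by omega : 2 * kn + sn + un ≤ x))
  rw [h1]
  have hsplit : ∑ i ∈ Finset.range (kn + 1), cH ((2 * kn + sn + un : ℕ) : ℤ) (tn:ℤ) (sn:ℤ) i
      + ∑ i ∈ Finset.Ico (kn + 1) (2 * kn + sn + un + 1), cH ((2 * kn + sn + un : ℕ) : ℤ) (tn:ℤ) (sn:ℤ) i
      = ∑ i ∈ Finset.range (2 * kn + sn + un + 1), cH ((2 * kn + sn + un : ℕ) : ℤ) (tn:ℤ) (sn:ℤ) i := by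
    simp only [Finset.range_eq_Ico]
    exact Finset.sum_Ico_consecutive _ (by omega) (by omega)
  rw [← hsplit]
  have hpart1 : ∑ i ∈ Finset.range (kn + 1), cH ((2 * kn + sn + un : ℕ) : ℤ) (tn:ℤ) (sn:ℤ) i
      = ∑ i ∈ Finset.range (kn + 1), (i : ℤ) := by
    apply Finset.sum_congr rfl
    intro i hi
    rw [Finset.mem_range] at hi
    exact cH_ascent hs0 hs1 hstz ht0 hu0z hu1z htkz hwzz i (by exact_mod_cast (by omega : i ≤ kn))
  set M : ℕ := kn + sn + un with hM
  have hpart2 : ∑ i ∈ Finset.Ico (kn + 1) (2 * kn + sn + un + 1), cH ((2 * kn + sn + un : ℕ) : ℤ) (tn:ℤ) (sn:ℤ) i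
      = ∑ j ∈ Finset.range M, ((j : ℤ) - if (tn:ℤ) < (j:ℤ) then (sn:ℤ) else 0) := by
    rw [Finset.sum_Ico_eq_sum_range]
    have hMM : 2 * kn + sn + un + 1 - (kn + 1) = M := by omega
    rw [hMM]
    rw [← Finset.sum_range_reflect]
    apply Finset.sum_congr rfl
    intro j hj
    rw [Finset.mem_range] at hj
    have hidx : kn + 1 + (M - 1 - j) = 2 * kn + sn + un - j := by omega
    rw [hidx]
    have hcast : ((2 * kn + sn + un - j : ℕ) : ℤ) = ((2 * kn + sn + un : ℕ) : ℤ) - j := by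
      push_cast [Nat.cast_sub (by omega : j ≤ 2 * kn + sn + un)]; ring
    rw [cH_descent hs0 hs1 hstz ht0 hu0z hu1z htkz hwzz (2 * kn + sn + un - j)
      (by rw [hcast, hwzz]; omega) (by rw [hcast]; omega)]
    rw [hcast, hwzz]
    have : 2 * (kn:ℤ) + sn + un - (2 * (kn:ℤ) + sn + un - j) = (j:ℤ) := by ring
    rw [show (2 * (kn:ℤ) + (sn:ℤ) + (un:ℤ)) - ((2 * (kn:ℤ) + (sn:ℤ) + (un:ℤ)) - (j:ℤ)) = (j:ℤ) from by ring]
  rw [hpart1, hpart2, Finset.sum_sub_distrib]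
  have g1 : 2 * ∑ i ∈ Finset.range (kn + 1), (i : ℤ) = ((kn:ℤ) + 1) * kn := by
    rw [gauss]; push_cast; ring
  have g2 : 2 * ∑ j ∈ Finset.range M, (j : ℤ) = (M:ℤ) * ((M:ℤ) - 1) := gauss M
  have hMc : (M : ℤ) = (kn:ℤ) + sn + un := by push_cast [hM]; ring
  have g3 : 2 * ∑ j ∈ Finset.range M, (if (tn:ℤ) < (j:ℤ) then (sn:ℤ) else 0)
      = 2 * (sn:ℤ) * ((kn:ℤ) + sn + un - tn - 1) := by
    rcases Nat.le_one_iff_eq_zero_or_eq_one.mp hsu with hs | hs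
    · rw [Finset.sum_eq_zero (fun j _ => by rw [hs]; simp)]
      rw [hs]; push_cast; ring
    · rw [ite_sum tn (sn:ℤ) M (by omega), hMc]; ring
  have expand : 2 * (∑ i ∈ Finset.range (kn + 1), (i:ℤ)
        + (∑ j ∈ Finset.range M, (j:ℤ) - ∑ j ∈ Finset.range M, (if (tn:ℤ) < (j:ℤ) then (sn:ℤ) else 0)))
      = 2 * ∑ i ∈ Finset.range (kn + 1), (i:ℤ) + 2 * ∑ j ∈ Finset.range M, (j:ℤ)
        - 2 * ∑ j ∈ Finset.range M, (if (tn:ℤ) < (j:ℤ) then (sn:ℤ) else 0) := by ring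
  rw [expand, g1, g2, g3, hMc]
  rcases Nat.le_one_iff_eq_zero_or_eq_one.mp hsu with hs | hs
  · have htn : tn = 0 := hts0 hs
    have hun0 : un = 0 := by omega
    rw [hs, htn, hun0]; push_cast; ring
  · rcases Nat.le_one_iff_eq_zero_or_eq_one.mp hun with hu | hu <;> rw [hs, hu] <;> push_cast <;> ring

section competitor

variable {mz : List Move} {n : ℕ} (hlen : mz.length = n) (hMz : IsMotzkin mz)

include hlen in
lemma g_step {i : ℕ} (hi : i < n) : |heightAt mz (i + 1) - heightAt mz i| ≤ 1 := by
  rw [heightAt_succ mz (by omega : i < mz.length)]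
  rcases step_abs (mz[i]'(by omega)) with h | h | h <;> rw [h] <;> simp

include hlen in
lemma L1 : ∀ j ≤ n, heightAt mz j ≤ (j : ℤ) := by
  intro j
  induction j with
  | zero => intro _; rw [heightAt_zero]; simp
  | succ j ih =>
    intro hj
    have h1 := g_step hlen (by omega : j < n)
    have h2 := ih (by omega)
    rw [abs_le] at h1
    push_cast
    omega

include hlen in
lemma L2 : ∀ m j, j + m ≤ n → heightAt mz j ≤ heightAt mz (j + m) + (m : ℤ) := by
  intro m
  induction m with
  | zero => intro j _; simp
  | succ m ih =>
    intro j hj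
    have h1 := ih j (by omega)
    have h2 := g_step hlen (by omega : j + m < n)
    rw [abs_le] at h2
    have : j + (m + 1) = (j + m) + 1 := by omega
    rw [this]
    push_cast
    push_cast at h1
    omega

include hlen hMz in
lemma L3 : ∀ fuel i, n ≤ i + fuel → i ≤ n →
    heightAt mz i * (heightAt mz i - 1) ≤ 2 * ∑ j ∈ Finset.Ico (i + 1) (n + 1), heightAt mz j := by
  intro fuel
  induction fuel with
  | zero =>
    intro i h1 h2
    have hin : i = n := by omega
    rw [hin, Finset.Ico_self, Finset.sum_empty]
    have hz : heightAt mz n = 0 := by rw [← hlen]; exact hMz.2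
    rw [hz]; norm_num
  | succ fuel ih =>
    intro i h1 h2
    rcases Nat.eq_or_lt_of_le h2 with he | hlt
    · rw [he, Finset.Ico_self, Finset.sum_empty]
      have hz : heightAt mz n = 0 := by rw [← hlen]; exact hMz.2
      rw [hz]; norm_num
    · rw [Finset.sum_eq_sum_Ico_succ_bot (by omega : i + 1 < n + 1)]
      have hrec := ih (i + 1) (by omega) (by omega)
      have hstp := g_step hlen (by omega : i < n)
      rw [abs_le] at hstp
      have hnn1 : 0 ≤ heightAt mz (i + 1) := hMz.1 (i + 1)
      have hnn0 : 0 ≤ heightAt mz i := hMz.1 i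
      set a := heightAt mz i
      set b := heightAt mz (i + 1)
      have key : a * (a - 1) ≤ b * (b + 1) := by
        rcases le_or_gt a 0 with ha | ha
        · have haz : a = 0 := le_antisymm ha hnn0
          rw [haz]
          simp
          positivity
        · have h3 : a - 1 ≤ b := by omega
          have h4 : a ≤ b + 1 := by omega
          calc a * (a - 1) = (a - 1) * a := mul_comm _ _
            _ ≤ b * (b + 1) := mul_le_mul h3 h4 hnn0 hnn1
      linarith

include hlen in
lemma sum_split (A : ℤ) (hA : area mz = A) {i : ℕ} (hi : i ≤ n) :
    ∑ j ∈ Finset.range (i + 1), heightAt mz j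
      + ∑ j ∈ Finset.Ico (i + 1) (n + 1), heightAt mz j = A := by
  rw [← hA]
  unfold area
  rw [hlen]
  simp only [Finset.range_eq_Ico]
  exact Finset.sum_Ico_consecutive _ (by omega) (by omega)

end competitor

lemma K1 (n kn tn sn un : ℕ) (hsu : sn ≤ 1) (hst : sn ≤ tn)
    (hwn : 2 * kn + sn + un ≤ n) :
    ∀ fuel i, n ≤ i + fuel → i ≤ n →
      2 * ∑ j ∈ Finset.Ico (i + 1) (n + 1), cH ((2 * kn + sn + un : ℕ) : ℤ) (tn : ℤ) (sn : ℤ) j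
        ≤ (((2 * kn + sn + un : ℕ) : ℤ) - i) * (((2 * kn + sn + un : ℕ) : ℤ) - i - 1) := by
  have hs0 : (0:ℤ) ≤ (sn:ℤ) := Int.natCast_nonneg _
  have hs1 : (sn:ℤ) ≤ 1 := by exact_mod_cast hsu
  have hstz : (sn:ℤ) ≤ (tn:ℤ) := by exact_mod_cast hst
  have ht0 : (0:ℤ) ≤ (tn:ℤ) := Int.natCast_nonneg _
  set W : ℤ := ((2 * kn + sn + un : ℕ) : ℤ) with hW
  have hWn : W ≤ (n : ℤ) := by rw [hW]; exact_mod_cast hwn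
  intro fuel
  induction fuel with
  | zero =>
    intro i h1 h2
    have : i = n := by omega
    subst this
    rw [Finset.Ico_self, Finset.sum_empty]
    nlinarith [hWn]
  | succ fuel ih =>
    intro i h1 h2
    rcases le_or_gt W (i : ℤ) with hc | hc
    · have hz : ∑ j ∈ Finset.Ico (i + 1) (n + 1), cH W (tn:ℤ) (sn:ℤ) j = 0 := by
        apply Finset.sum_eq_zero
        intro j hj
        rw [Finset.mem_Ico] at hj
        exact cH_of_ge j (by push_cast; omega)
      rw [hz]
      nlinarith [hc]
    · have hin : i < n := by
        have : (i:ℤ) < (n:ℤ) := lt_of_lt_of_le hc hWn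
        exact_mod_cast this
      rw [Finset.sum_eq_sum_Ico_succ_bot (by omega : i + 1 < n + 1)]
      have hrec := ih (i + 1) (by omega) (by omega)
      have hle : cH W (tn:ℤ) (sn:ℤ) (i + 1) ≤ W - ((i:ℤ) + 1) := by
        have h5 := cH_le (w := W) hs0 hs1 hstz ht0 (i + 1) (by push_cast; omega)
        push_cast at h5
        linarith
      push_cast at hrec
      have hx : (W - (i:ℤ)) * (W - (i:ℤ) - 1)
          = (W - ((i:ℤ)+1)) * (W - ((i:ℤ)+1) - 1) + 2 * (W - ((i:ℤ)+1)) := by ring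
      linarith

lemma dominance (n A kn tn sn un : ℕ) (hsu : sn ≤ 1) (hun : un ≤ 1) (hst : sn ≤ tn)
    (hts0 : sn = 0 → tn = 0) (hus : un ≤ sn) (htk : tn ≤ kn)
    (hwn : 2 * kn + sn + un ≤ n)
    (hAeq : (A : ℤ) = (kn : ℤ) ^ 2 + un * kn + tn)
    (mz : List Move) (hlen : mz.length = n) (hMz : IsMotzkin mz) (harea : area mz = (A : ℤ))
    (i : ℕ) (hi : i ≤ n) :
    ∑ j ∈ Finset.range (i + 1), heightAt mz j
      ≤ ∑ j ∈ Finset.range (i + 1), cH ((2 * kn + sn + un : ℕ) : ℤ) (tn : ℤ) (sn : ℤ) j := by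
  have hs0 : (0:ℤ) ≤ (sn:ℤ) := Int.natCast_nonneg _
  have hs1 : (sn:ℤ) ≤ 1 := by exact_mod_cast hsu
  have hstz : (sn:ℤ) ≤ (tn:ℤ) := by exact_mod_cast hst
  have ht0 : (0:ℤ) ≤ (tn:ℤ) := Int.natCast_nonneg _
  set W : ℤ := ((2 * kn + sn + un : ℕ) : ℤ) with hW
  have hWn : W ≤ (n : ℤ) := by rw [hW]; exact_mod_cast hwn
  set d : ℤ := heightAt mz i with hd
  have hd0 : 0 ≤ d := hMz.1 i
  rcases lt_or_ge (d + (i:ℤ)) W with hlt | hge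
  · -- termwise
    apply Finset.sum_le_sum
    intro j hj
    rw [Finset.mem_range] at hj
    have hjn : j ≤ i := by omega
    have hji : (j : ℤ) ≤ (i : ℤ) := by exact_mod_cast hjn
    have hjW : (j : ℤ) < W := by omega
    rcases cH_cases (w := W) hs0 hs1 hstz ht0 j hjW with hc | hc
    · rw [hc]
      exact L1 hlen j (by omega)
    · have hL2 := L2 hlen (i - j) j (by omega)
      have hcast : ((i - j : ℕ) : ℤ) = (i : ℤ) - j := by
        rw [Nat.cast_sub hjn]
      have hji2 : j + (i - j) = i := by omega
      rw [hji2, hcast] at hL2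
      omega
  · -- tail bound
    have h2g := L3 hlen hMz n i (by omega) hi
    have hsg := sum_split hlen ((A:ℤ)) harea hi
    have hsc : ∑ j ∈ Finset.range (i + 1), cH W (tn:ℤ) (sn:ℤ) j
        + ∑ j ∈ Finset.Ico (i + 1) (n + 1), cH W (tn:ℤ) (sn:ℤ) j
        = ∑ j ∈ Finset.range (n + 1), cH W (tn:ℤ) (sn:ℤ) j := by
      simp only [Finset.range_eq_Ico]
      exact Finset.sum_Ico_consecutive _ (by omega) (by omega)
    have hstot : 2 * ∑ j ∈ Finset.range (n + 1), cH W (tn:ℤ) (sn:ℤ) j = 2 * (A:ℤ) := by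
      rw [sum_cH n kn tn sn un hsu hun hst hts0 hus htk hwn, hAeq]
    rcases lt_or_ge (i : ℤ) W with hc | hc
    · have hK1 := K1 n kn tn sn un hsu hst hwn n i (by omega) hi
      have hmul : (W - i) * (W - i - 1) ≤ d * (d - 1) := by
        apply mul_le_mul (by omega) (by omega) (by omega) hd0
      linarith
    · have hz : ∑ j ∈ Finset.Ico (i + 1) (n + 1), cH W (tn:ℤ) (sn:ℤ) j = 0 := by
        apply Finset.sum_eq_zero
        intro j hj
        rw [Finset.mem_Ico] at hj
        exact cH_of_ge j (by push_cast; omega)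
      have hgz : 0 ≤ ∑ j ∈ Finset.Ico (i + 1) (n + 1), heightAt mz j :=
        Finset.sum_nonneg (fun j _ => hMz.1 j)
      linarith

lemma prefixArea_eq (mz : List Move) (i : ℕ) :
    prefixArea mz i = (((∑ j ∈ Finset.range i, heightAt mz j)
      + ∑ j ∈ Finset.range (i + 1), heightAt mz j : ℤ) : ℚ) / 2 := by
  unfold prefixArea
  rw [← Finset.sum_div, Finset.sum_add_distrib]
  push_cast
  rw [Finset.sum_range_succ' (fun j => ((heightAt mz j : ℤ) : ℚ)) i]
  have h0 : heightAt mz 0 = 0 := heightAt_zero mz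
  rw [h0]
  push_cast
  ring

/-- for every `n` and every `A ≤ ⌊n²/4⌋`, there is exactly one Motzkin path
of width `n` and area `A` all of whose prefix areas are maximal among paths in `MZ(n,A)`
(the canonic path); in particular `MZ(n,A)` is nonempty. -/
theorem canonic_path_exists_unique (n A : ℕ) (hA : A ≤ n ^ 2 / 4) :
    (∃! mz : List Move, mz ∈ MZ n A ∧
      ∀ i ≤ n, ∀ mz' ∈ MZ n A, prefixArea mz' i ≤ prefixArea mz i) ∧
    (MZ n A).Nonempty := by
  -- parameters
  set kn : ℕ := Nat.sqrt A with hkn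
  have hk1 : kn * kn ≤ A := by simpa [pow_two] using Nat.sqrt_le' A
  have hk2 : A < (kn + 1) * (kn + 1) := by
    simpa [pow_two, Nat.succ_eq_add_one] using Nat.lt_succ_sqrt' A
  set E : ℕ := A - kn * kn with hE
  have hE2k : E ≤ 2 * kn := by
    have hx : (kn + 1) * (kn + 1) = kn * kn + 2 * kn + 1 := by ring
    omega
  have h4A : A * 4 ≤ n ^ 2 := (Nat.le_div_iff_mul_le (by norm_num)).mp hA
  obtain ⟨sn, un, tn, hsu, hun, hst, hts0, hus, htk, hAn, hwn⟩ :
      ∃ sn un tn : ℕ, sn ≤ 1 ∧ un ≤ 1 ∧ sn ≤ tn ∧ (sn = 0 → tn = 0) ∧ un ≤ sn ∧ tn ≤ kn ∧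
        A = kn * kn + un * kn + tn ∧ 2 * kn + sn + un ≤ n := by
    have hnn : n ^ 2 = n * n := sq n
    rw [hnn] at h4A
    have h4AZ : 4 * (A:ℤ) ≤ (n:ℤ) * n := by exact_mod_cast (by linarith : 4 * A ≤ n * n)
    have hk1Z : ((kn:ℤ)) * kn ≤ (A:ℤ) := by exact_mod_cast hk1
    have hn0 : (0:ℤ) ≤ (n:ℤ) := Int.natCast_nonneg n
    have hEZ : ((E:ℤ)) = (A:ℤ) - (kn:ℤ) * kn := by
      have : E + kn * kn = A := by omega
      push_cast [← this]; ring
    rcases Nat.eq_zero_or_pos E with h0 | h0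
    · refine ⟨0, 0, 0, by omega, by omega, by omega, by omega, by omega, by omega, by omega, ?_⟩
      by_contra hcon
      push_neg at hcon
      rcases Nat.eq_zero_or_pos kn with hk0 | hk0
      · omega
      · have hle : (n:ℤ) ≤ 2 * (kn:ℤ) - 1 := by
          have : (n:ℤ) < 2 * (kn:ℤ) := by exact_mod_cast (by omega : n < 2 * kn)
          omega
        have hkg : (1:ℤ) ≤ (kn:ℤ) := by exact_mod_cast hk0
        have hmul : (n:ℤ) * (n:ℤ) ≤ (2 * (kn:ℤ) - 1) * (2 * (kn:ℤ) - 1) :=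
          mul_le_mul hle hle hn0 (by omega)
        have hAZ : (A:ℤ) = (kn:ℤ) * kn := by
          have hEz : (E:ℤ) = 0 := by exact_mod_cast h0
          omega
        nlinarith [hmul, h4AZ]
    · have hE1Z : (1:ℤ) ≤ (E:ℤ) := by exact_mod_cast h0
      rcases le_or_gt E kn with h1 | h1
      · refine ⟨1, 0, E, by omega, by omega, by omega, by omega, by omega, by omega, by omega, ?_⟩
        by_contra hcon
        push_neg at hcon
        have hle : (n:ℤ) ≤ 2 * (kn:ℤ) := by exact_mod_cast (by omega : n ≤ 2 * kn)
        have hkg : (0:ℤ) ≤ (kn:ℤ) := Int.natCast_nonneg kn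
        have hmul : (n:ℤ) * (n:ℤ) ≤ (2 * (kn:ℤ)) * (2 * (kn:ℤ)) :=
          mul_le_mul hle hle hn0 (by omega)
        nlinarith [hmul, h4AZ]
      · refine ⟨1, 1, E - kn, by omega, by omega, by omega, by omega, by omega, by omega, by omega, ?_⟩
        by_contra hcon
        push_neg at hcon
        have hle : (n:ℤ) ≤ 2 * (kn:ℤ) + 1 := by exact_mod_cast (by omega : n ≤ 2 * kn + 1)
        have hkg : (0:ℤ) ≤ (kn:ℤ) := Int.natCast_nonneg kn
        have hE2 : (kn:ℤ) + 1 ≤ (E:ℤ) := by exact_mod_cast (by omega : kn + 1 ≤ E)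
        have hmul : (n:ℤ) * (n:ℤ) ≤ (2 * (kn:ℤ) + 1) * (2 * (kn:ℤ) + 1) :=
          mul_le_mul hle hle hn0 (by omega)
        nlinarith [hmul, h4AZ]
  have hAeq : (A : ℤ) = (kn : ℤ) ^ 2 + un * kn + tn := by rw [hAn]; push_cast; ring
  -- the canonic path
  have hs0 : (0:ℤ) ≤ (sn:ℤ) := Int.natCast_nonneg _
  have hs1 : (sn:ℤ) ≤ 1 := by exact_mod_cast hsu
  have hstz : (sn:ℤ) ≤ (tn:ℤ) := by exact_mod_cast hst
  have ht0 : (0:ℤ) ≤ (tn:ℤ) := Int.natCast_nonneg _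
  have hu0z : (0:ℤ) ≤ (un : ℤ) := Int.natCast_nonneg _
  have hu1z : (un : ℤ) ≤ 1 := by exact_mod_cast hun
  have htkz : (tn:ℤ) ≤ (kn : ℤ) := by exact_mod_cast htk
  set W : ℤ := ((2 * kn + sn + un : ℕ) : ℤ) with hW
  have hWzz : W = 2 * (kn : ℤ) + (sn:ℤ) + (un : ℤ) := by rw [hW]; push_cast; ring
  have hWn : W ≤ (n : ℤ) := by rw [hW]; exact_mod_cast hwn
  set ch : ℕ → ℤ := fun i => cH W (tn:ℤ) (sn:ℤ) i with hch
  set C : List Move := ofHeights ch n with hC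
  have hstepc : ∀ i < n, |ch (i + 1) - ch i| ≤ 1 := fun i _ => cH_step hs0 hs1 hstz ht0 i
  have hch0 : ch 0 = 0 := by
    have := cH_ascent (w := W) (u := (un:ℤ)) (k := (kn:ℤ)) hs0 hs1 hstz ht0 hu0z hu1z htkz hWzz 0
      (by exact_mod_cast Int.natCast_nonneg kn)
    simpa using this
  have hHC : ∀ i ≤ n, heightAt C i = ch i := heightAt_ofHeights ch n hch0 hstepc
  have hlenC : C.length = n := length_ofHeights _ _
  have hCn : heightAt C n = 0 := by
    rw [hHC n le_rfl, hch]
    exact cH_of_ge n hWn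
  have hmotz : IsMotzkin C := by
    constructor
    · intro i
      rcases le_or_gt i n with hi | hi
      · rw [hHC i hi, hch]; exact cH_nonneg hs0 hs1 hstz ht0 i
      · rw [heightAt_of_le C (by omega), hlenC, hCn]
    · rw [hlenC]; exact hCn
  have hsumC : ∑ j ∈ Finset.range (n + 1), heightAt C j = (A : ℤ) := by
    have h1 : ∑ j ∈ Finset.range (n + 1), heightAt C j
        = ∑ j ∈ Finset.range (n + 1), ch j := by
      apply Finset.sum_congr rfl
      intro j hj
      rw [Finset.mem_range] at hj
      exact hHC j (by omega)
    have h2 := sum_cH n kn tn sn un hsu hun hst hts0 hus htk hwn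
    rw [← hW] at h2
    have h3 : ∑ j ∈ Finset.range (n + 1), ch j
        = ∑ j ∈ Finset.range (n + 1), cH W (tn:ℤ) (sn:ℤ) j := by
      apply Finset.sum_congr rfl
      intro j _
      rw [hch]
    rw [h1, h3]
    linarith [hAeq]
  have hareaC : area C = (A : ℤ) := by
    unfold area
    rw [hlenC, hsumC]
  have hCMZ : C ∈ MZ n A := ⟨hlenC, hmotz, hareaC⟩
  -- dominance
  have hdomS : ∀ mz' ∈ MZ n A, ∀ m ≤ n + 1,
      ∑ j ∈ Finset.range m, heightAt mz' j ≤ ∑ j ∈ Finset.range m, heightAt C j := by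
    rintro mz' ⟨hlen', hmotz', harea'⟩ m hm
    cases m with
    | zero => simp
    | succ m =>
      have h1 : ∑ j ∈ Finset.range (m + 1), heightAt C j
          = ∑ j ∈ Finset.range (m + 1), cH W (tn:ℤ) (sn:ℤ) j := by
        apply Finset.sum_congr rfl
        intro j hj
        rw [Finset.mem_range] at hj
        rw [hHC j (by omega), hch]
      rw [h1]
      have hd := dominance n A kn tn sn un hsu hun hst hts0 hus htk hwn hAeq mz' hlen' hmotz'
        harea' m (by omega)
      rw [← hW] at hd
      exact hd
  have hdomPA : ∀ i ≤ n, ∀ mz' ∈ MZ n A, prefixArea mz' i ≤ prefixArea C i := by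
    intro i hi mz' hmz'
    rw [prefixArea_eq, prefixArea_eq]
    have h1 := hdomS mz' hmz' i (by omega)
    have h2 := hdomS mz' hmz' (i + 1) (by omega)
    have : ((∑ j ∈ Finset.range i, heightAt mz' j + ∑ j ∈ Finset.range (i + 1), heightAt mz' j : ℤ) : ℚ)
        ≤ ((∑ j ∈ Finset.range i, heightAt C j + ∑ j ∈ Finset.range (i + 1), heightAt C j : ℤ) : ℚ) := by
      exact_mod_cast add_le_add h1 h2
    linarith
  refine ⟨⟨C, ⟨hCMZ, fun i hi mz2 hmz2 => hdomPA i hi mz2 hmz2⟩, ?_⟩, ⟨C, hCMZ⟩⟩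
  rintro mz' ⟨hmz'MZ, hmax'⟩
  have hpaeq : ∀ i ≤ n, prefixArea mz' i = prefixArea C i := by
    intro i hi
    exact le_antisymm (hdomPA i hi mz' hmz'MZ) (hmax' i hi C hCMZ)
  have hSeq : ∀ m ≤ n + 1,
      ∑ j ∈ Finset.range m, heightAt mz' j = ∑ j ∈ Finset.range m, heightAt C j := by
    intro m
    induction m with
    | zero => intro _; simp
    | succ m ih =>
      intro hm
      have h1 := hpaeq m (by omega)
      rw [prefixArea_eq, prefixArea_eq] at h1
      have h2 : ((∑ j ∈ Finset.range m, heightAt mz' j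
            + ∑ j ∈ Finset.range (m + 1), heightAt mz' j : ℤ) : ℚ)
          = ((∑ j ∈ Finset.range m, heightAt C j
            + ∑ j ∈ Finset.range (m + 1), heightAt C j : ℤ) : ℚ) := by
        field_simp at h1
        exact_mod_cast h1
      have h3 : (∑ j ∈ Finset.range m, heightAt mz' j)
            + ∑ j ∈ Finset.range (m + 1), heightAt mz' j
          = (∑ j ∈ Finset.range m, heightAt C j)
            + ∑ j ∈ Finset.range (m + 1), heightAt C j := by exact_mod_cast h2
      have h4 := ih (by omega)
      omega
  have hheq : ∀ i ≤ n, heightAt mz' i = heightAt C i := by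
    intro i hi
    have h1 := hSeq i (by omega)
    have h2 := hSeq (i + 1) (by omega)
    rw [Finset.sum_range_succ, Finset.sum_range_succ] at h2
    omega
  obtain ⟨hlen', hmotz', harea'⟩ := hmz'MZ
  apply List.ext_getElem (by rw [hlen', hlenC])
  intro i h1 h2
  have hiN : i < n := by rw [hlen'] at h1; exact h1
  have e1 : heightAt mz' (i + 1) = heightAt mz' i + (mz'[i]'h1).step :=
    heightAt_succ mz' h1
  have e2 : heightAt C (i + 1) = heightAt C i + (C[i]'h2).step :=
    heightAt_succ C h2
  have e3 : (mz'[i]'h1).step = (C[i]'h2).step := by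
    have q1 := hheq i (by omega)
    have q2 := hheq (i + 1) (by omega)
    linarith [e1, e2, q1, q2]
  exact step_inj e3
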